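/- Let ν ≥ 1 be an integer. Define h, k : ℂ² → ℂ by h(x, y) = x and k(x, y) = x·y^ν − 1; these holomorphic functions have no common zeros. Then there is no holomorphic function f : ℂ² → ℂ such that h(x, y) − k(x, y)·f(x, y) ≠ 0 for all (x, y) ∈ ℂ². Equivalently, the meromorphic function m_ν(x, y) = x/(x·y^ν − 1) on ℂ² cannot be written in the form m_ν = f + 1/g with f, g holomorphic on ℂ². -/

import Mathlib

open Complex Set Real

/-- A loop (on `[0,1]`) admits a periodic continuous logarithm. -/
def ExpTrivial (γ : ℝ → ℂ) : Prop :=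
  ∃ L : ℝ → ℂ, ContinuousOn L (Icc 0 1) ∧ (∀ θ ∈ Icc (0:ℝ) 1, Complex.exp (L θ) = γ θ) ∧
    L 0 = L 1

lemma expTrivial_const (c : ℂ) (hc : c ≠ 0) : ExpTrivial (fun _ => c) :=
  ⟨fun _ => Complex.log c, continuousOn_const, fun _ _ => Complex.exp_log hc, rfl⟩

/-- Dog-on-a-leash: a loop uniformly closer to `γ` than `|γ|` is `ExpTrivial` if `γ` is. -/
lemma expTrivial_of_close {γ γ' : ℝ → ℂ}
    (hγ' : ContinuousOn γ' (Icc 0 1))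
    (hlt : ∀ θ ∈ Icc (0:ℝ) 1, ‖γ' θ - γ θ‖ < ‖γ θ‖)
    (hloop : γ' 0 = γ' 1) (h : ExpTrivial γ) : ExpTrivial γ' := by
  obtain ⟨L, hLc, hLexp, hL01⟩ := h
  have hγc : ContinuousOn γ (Icc 0 1) := by
    have : ContinuousOn (fun θ => Complex.exp (L θ)) (Icc 0 1) :=
      Complex.continuous_exp.comp_continuousOn hLc
    exact this.congr fun θ hθ => (hLexp θ hθ).symm
  have hγne : ∀ θ ∈ Icc (0:ℝ) 1, γ θ ≠ 0 := by
    intro θ hθ hz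
    have := hlt θ hθ
    rw [hz] at this
    simp only [sub_zero, map_zero, norm_zero] at this
    exact absurd this (not_lt.2 (norm_nonneg _))
  set q : ℝ → ℂ := fun θ => γ' θ / γ θ with hq
  have hqslit : ∀ θ ∈ Icc (0:ℝ) 1, q θ ∈ Complex.slitPlane := by
    intro θ hθ
    have hne := hγne θ hθ
    have h1 : ‖q θ - 1‖ < 1 := by
      have : q θ - 1 = (γ' θ - γ θ) / γ θ := by
        simp only [hq]
        rw [div_sub_one hne]
      rw [this, norm_div, div_lt_one (norm_pos_iff.mpr hne)]
      exact hlt θ hθ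
    have h2 : (1 - q θ).re ≤ ‖1 - q θ‖ := Complex.re_le_norm _
    rw [← norm_neg, neg_sub] at h1
    left
    have : (1 - q θ).re = 1 - (q θ).re := by simp
    nlinarith [h2, h1]
  have hqne : ∀ θ ∈ Icc (0:ℝ) 1, q θ ≠ 0 := fun θ hθ =>
    Complex.slitPlane_ne_zero (hqslit θ hθ)
  refine ⟨fun θ => L θ + Complex.log (q θ), ?_, ?_, ?_⟩
  · exact hLc.add ((hγ'.div hγc hγne).clog hqslit)
  · intro θ hθ
    rw [Complex.exp_add, Complex.exp_log (hqne θ hθ), hLexp θ hθ, hq]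
    rw [mul_comm, div_mul_cancel₀ _ (hγne θ hθ)]
  · have hγ01 : γ 0 = γ 1 := by
      rw [← hLexp 0 (by norm_num), ← hLexp 1 (by norm_num), hL01]
    simp only [hq, hγ01, hloop, hL01]

/-- The loop `θ ↦ exp (-(2πi)·(ν θ))` is not `ExpTrivial` for `ν ≥ 1`. -/
lemma not_expTrivial (ν : ℕ) (hν : 1 ≤ ν) :
    ¬ ExpTrivial (fun θ : ℝ => Complex.exp (-(2 * π * I) * (ν * θ))) := by
  rintro ⟨L, hLc, hLexp, hL01⟩
  -- integer-valued function
  have key : ∀ θ ∈ Icc (0:ℝ) 1, ∃ n : ℤ, (L θ).im + 2 * π * ν * θ = n * (2 * π) := by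
    intro θ hθ
    have := hLexp θ hθ
    rw [Complex.exp_eq_exp_iff_exists_int] at this
    obtain ⟨n, hn⟩ := this
    refine ⟨n, ?_⟩
    have him := congrArg Complex.im hn
    simp only [Complex.add_im, Complex.mul_im, Complex.neg_re, Complex.neg_im,
      Complex.mul_re, Complex.I_re, Complex.I_im, Complex.ofReal_re, Complex.ofReal_im,
      Complex.intCast_re, Complex.intCast_im, Complex.natCast_re, Complex.natCast_im,
      Complex.ofReal_mul, Complex.re_ofNat, Complex.im_ofNat] at him
    rw [him]; ring
  set r : ℝ → ℝ := fun θ => (L θ).im + 2 * π * ν * θ with hr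
  have hrc : ContinuousOn r (Icc 0 1) :=
    (Complex.continuous_im.comp_continuousOn hLc).add (by fun_prop)
  have hr1 : r 1 = r 0 + 2 * π * ν := by
    simp only [hr, hL01]; ring
  have hmid : r 0 + π ∈ Icc (r 0) (r 1) := by
    constructor
    · nlinarith [Real.pi_pos]
    · rw [hr1]
      have : (1:ℝ) ≤ ν := by exact_mod_cast hν
      nlinarith [Real.pi_pos]
  obtain ⟨θ, hθ, hrθ⟩ := intermediate_value_Icc (by norm_num) hrc hmid
  obtain ⟨n, hn⟩ := key θ hθ
  obtain ⟨n0, hn0⟩ := key 0 (by norm_num)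
  replace hn : r θ = n * (2 * π) := hn
  rw [hrθ] at hn
  have hn0' : r 0 = n0 * (2 * π) := by simpa [hr] using hn0
  rw [hn0'] at hn
  -- n0 * 2π + π = n * 2π  →  2(n - n0) = 1, impossible
  have hpi := Real.pi_pos
  have : (2 : ℝ) * (n - n0) = 1 := by
    have : π * (2 * (n - n0) - 1) = 0 := by nlinarith [hn]
    rcases mul_eq_zero.1 this with h | h
    · exact absurd h hpi.ne'
    · linarith
  have : (2 : ℤ) * (n - n0) = 1 := by exact_mod_cast this
  omega

/-- The meromorphic function `m_ν(x, y) = x/(x·y^ν − 1)` on `ℂ²` cannot be written as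
`f + 1/g` with `f, g` holomorphic: writing `h(x, y) = x` and `k(x, y) = x·y^ν − 1`,
these have no common zeros, and there is no holomorphic `f` with `h − k·f` nowhere
vanishing. -/
theorem no_decomposition (ν : ℕ) (hν : 1 ≤ ν) :
    (∀ x y : ℂ, x ≠ 0 ∨ x * y ^ ν - 1 ≠ 0) ∧
    ¬∃ f : ℂ × ℂ → ℂ, Differentiable ℂ f ∧
      ∀ x y : ℂ, x - (x * y ^ ν - 1) * f (x, y) ≠ 0 := by
  constructor
  · intro x y
    by_cases hx : x = 0
    · right; simp [hx]
    · left; exact hx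
  rintro ⟨f, hf, hF⟩
  set F : ℂ × ℂ → ℂ := fun q => q.1 - (q.1 * q.2 ^ ν - 1) * f q with hFdef
  have hFc : Continuous F := by
    have := hf.continuous
    fun_prop
  have hFne : ∀ q : ℂ × ℂ, F q ≠ 0 := fun q => by
    have := hF q.1 q.2
    simpa [hFdef] using this
  -- the homotopy
  set H : ℝ × ℝ → ℂ := fun p =>
    F ((p.1 : ℂ) ^ ν * Complex.exp (-(2 * π * I) * (ν * p.2)),
       (p.1 : ℂ) * Complex.exp (2 * π * I * p.2)) with hHdef
  have hHc : Continuous H := by fun_prop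
  have hHne : ∀ p, H p ≠ 0 := fun p => hFne _
  have hHloop : ∀ s : ℝ, H (s, 0) = H (s, 1) := by
    intro s
    have e1 : Complex.exp (-(2 * π * I * (ν : ℂ))) = 1 := by
      have := Complex.exp_int_mul_two_pi_mul_I (-(ν : ℤ))
      rw [← this]; congr 1; push_cast; ring_nf
    have e2 : Complex.exp (2 * π * I) = 1 := by
      have := Complex.exp_int_mul_two_pi_mul_I 1
      rw [← this]; congr 1; push_cast; ring_nf
    simp [hHdef, e1, e2]
  -- at s = 1 the loop is `exp (-(2πi) ν θ)`
  have hH1 : ∀ θ : ℝ, H (1, θ) = Complex.exp (-(2 * π * I) * (ν * θ)) := by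
    intro θ
    have hxy : ((1 : ℝ) : ℂ) ^ ν * Complex.exp (-(2 * π * I) * (ν * θ)) *
        (((1 : ℝ) : ℂ) * Complex.exp (2 * π * I * θ)) ^ ν = 1 := by
      simp only [Complex.ofReal_one, one_pow, one_mul]
      rw [← Complex.exp_nat_mul, ← Complex.exp_add, ← Complex.exp_zero]
      congr 1; ring
    simp only [hHdef, hFdef, hxy]
    simp
  -- at s = 0 the loop is constant
  have hH0 : ∀ θ : ℝ, H (0, θ) = F (0, 0) := by
    intro θ
    simp [hHdef, zero_pow (show ν ≠ 0 by omega), Prod.mk_zero_zero]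
  -- compactness: positive lower bound and uniform continuity
  set K : Set (ℝ × ℝ) := Icc 0 1 ×ˢ Icc 0 1 with hKdef
  have hKcomp : IsCompact K := isCompact_Icc.prod isCompact_Icc
  obtain ⟨p₀, hp₀K, hp₀min'⟩ := hKcomp.exists_isMinOn (f := fun p => ‖H p‖)
    ⟨(0, 0), by constructor <;> constructor <;> norm_num⟩
    (continuous_norm.comp hHc).continuousOn
  have hp₀min : ∀ p ∈ K, ‖H p₀‖ ≤ ‖H p‖ := fun p hp => hp₀min' hp
  set δ : ℝ := ‖H p₀‖ with hδdef
  have hδ : 0 < δ := by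
    simpa [hδdef] using norm_pos_iff.2 (hHne p₀)
  have hUC : UniformContinuousOn H K := hKcomp.uniformContinuousOn_of_continuous hHc.continuousOn
  rw [Metric.uniformContinuousOn_iff] at hUC
  obtain ⟨ε, hε, hUC⟩ := hUC δ hδ
  obtain ⟨n, hn⟩ := exists_nat_one_div_lt hε
  set m : ℕ := n + 1 with hm
  have hm0 : (0 : ℝ) < m := by positivity
  -- membership helper
  have hmemK : ∀ (k : ℕ), k ≤ m → ∀ θ ∈ Icc (0:ℝ) 1, ((k : ℝ) / m, θ) ∈ K := by
    intro k hk θ hθ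
    refine ⟨⟨by positivity, ?_⟩, hθ⟩
    rw [div_le_one hm0]
    exact_mod_cast hk
  -- induction along the homotopy
  have chain : ∀ k : ℕ, k ≤ m → ExpTrivial (fun θ => H ((k : ℝ) / m, θ)) := by
    intro k hk
    induction k with
    | zero =>
      simp only [Nat.cast_zero, zero_div]
      have : (fun θ : ℝ => H (0, θ)) = fun _ => F (0, 0) := funext hH0
      rw [this]
      exact expTrivial_const _ (hFne _)
    | succ k ih =>
      apply expTrivial_of_close (γ := fun θ => H ((k : ℝ) / m, θ))
      · exact (hHc.comp (by fun_prop)).continuousOn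
      · intro θ hθ
        have h1 : ((k : ℝ) / m, θ) ∈ K := hmemK k (by omega) θ hθ
        have h2 : (((k : ℕ) + 1 : ℕ) : ℝ) / m = ((k : ℝ) + 1) / m := by push_cast; ring
        have h3 : (((k : ℝ) + 1) / m, θ) ∈ K := by
          have := hmemK (k + 1) hk θ hθ
          rwa [h2] at this
        have h4 : dist (((k : ℝ) + 1) / m) ((k : ℝ) / m) = 1 / m := by
          rw [Real.dist_eq, div_sub_div_same, add_sub_cancel_left, abs_of_pos (by positivity)]
        have hd : dist ((((k : ℝ) + 1) / m, θ) : ℝ × ℝ) (((k : ℝ) / m, θ)) < ε := by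
          rw [Prod.dist_eq, dist_self, max_eq_left dist_nonneg, h4]
          have hmn : ((m : ℝ)) = (n : ℝ) + 1 := by rw [hm]; push_cast; ring
          rw [hmn]; exact hn
        have hlt : dist (H (((k : ℝ) + 1) / m, θ)) (H ((k : ℝ) / m, θ)) < δ :=
          hUC _ h3 _ h1 hd
        have hge : δ ≤ ‖H ((k : ℝ) / m, θ)‖ := hp₀min _ h1
        calc ‖H ((((k : ℕ) + 1 : ℕ) : ℝ) / m, θ) - H ((k : ℝ) / m, θ)‖
            = dist (H (((k : ℝ) + 1) / m, θ)) (H ((k : ℝ) / m, θ)) := by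
              rw [h2, Complex.dist_eq]
          _ < δ := hlt
          _ ≤ _ := hge
      · exact hHloop _
      · exact ih (by omega)
  have hfinal := chain m le_rfl
  rw [show ((m : ℝ) / m) = 1 from div_self hm0.ne'] at hfinal
  have : ExpTrivial (fun θ : ℝ => Complex.exp (-(2 * π * I) * (ν * θ))) := by
    have heq : (fun θ : ℝ => H (1, θ)) =
        fun θ : ℝ => Complex.exp (-(2 * π * I) * (ν * θ)) := funext hH1
    rwa [heq] at hfinal
  exact not_expTrivial ν hν this
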